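/- Lemma 1 (vector form): the function v ↦ E(0, v) attains its minimum over the cube [0, ε]^m at the unique point v* given componentwise by v* j = 0 if l j > λ j; v* j = 1 − (l j)/(λ j) if (λ j)·(1 − ε) ≤ l j ≤ λ j; and v* j = ε if l j < (λ j)·(1 − ε). That is, E(0, v*) ≤ E(0, v) for all v ∈ [0, ε]^m, with equality only at v = v*. -/

import Mathlib

open Finset

/-- Objective `E(u, v) = Σ_j max(u, v j) · l j − γ·u + (1/2)·Σ_j λ j · ((v j)² − 2·(v j))`. -/
noncomputable def Eobj (m : ℕ) (l lam : Fin m → ℝ) (γ : ℝ) (u : ℝ) (v : Fin m → ℝ) : ℝ :=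
  (∑ j, max u (v j) * l j) - γ * u + (1 / 2) * ∑ j, lam j * ((v j) ^ 2 - 2 * v j)

lemma comp_min (L Λ ε t : ℝ) (hΛ : 0 < Λ) (hL : 0 ≤ L) (hε0 : 0 < ε) (hε1 : ε < 1)
    (ht0 : 0 ≤ t) (htε : t ≤ ε) :
    (Λ/2 * (if Λ < L then (0:ℝ) else if L < Λ*(1-ε) then ε else 1 - L/Λ)^2
      + (L - Λ) * (if Λ < L then (0:ℝ) else if L < Λ*(1-ε) then ε else 1 - L/Λ)
      ≤ Λ/2 * t^2 + (L - Λ) * t) ∧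
    (Λ/2 * (if Λ < L then (0:ℝ) else if L < Λ*(1-ε) then ε else 1 - L/Λ)^2
      + (L - Λ) * (if Λ < L then (0:ℝ) else if L < Λ*(1-ε) then ε else 1 - L/Λ)
      = Λ/2 * t^2 + (L - Λ) * t → t = (if Λ < L then (0:ℝ) else if L < Λ*(1-ε) then ε else 1 - L/Λ)) := by
  split_ifs with h1 h2
  · constructor
    · nlinarith
    · intro he
      rcases ht0.eq_or_lt with h | h
      · exact h.symm
      · exfalso; nlinarith
  · constructor
    · nlinarith [mul_nonneg (sub_nonneg.2 htε) (by nlinarith : (0:ℝ) ≤ Λ - Λ*ε - L), sq_nonneg (ε - t), hΛ.le]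
    · intro he
      rcases htε.eq_or_lt with h | h
      · exact h
      · exfalso; nlinarith [sq_nonneg (ε - t)]
  · push_neg at h1 h2
    set s : ℝ := 1 - L/Λ with hs_def
    have hs : Λ * s = Λ - L := by
      rw [hs_def]
      have h' : L / Λ * Λ = L := by field_simp [hΛ.ne']
      linarith
    have h0 : Λ*s + L - Λ = 0 := by rw [hs]; ring
    have key : Λ/2*t^2+(L-Λ)*t - (Λ/2*s^2+(L-Λ)*s)
        = Λ/2*(t-s)^2 + (Λ*s+L-Λ)*(t-s) := by ring
    rw [h0, zero_mul, add_zero] at key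
    constructor
    · nlinarith [mul_nonneg hΛ.le (sq_nonneg (t-s)), key]
    · intro he
      have h4 : Λ/2*(t-s)^2 = 0 := by linarith
      have h3 : (t - s)^2 = 0 := by
        rcases mul_eq_zero.1 h4 with h | h
        · exfalso; linarith
        · exact h
      have := pow_eq_zero_iff (n := 2) (by norm_num) |>.1 h3
      linarith [sub_eq_zero.1 this]

lemma Eobj_eq (m : ℕ) (l lam : Fin m → ℝ) (γ : ℝ) (v : Fin m → ℝ) (hv : ∀ j, 0 ≤ v j) :
    Eobj m l lam γ 0 v = ∑ j, (lam j / 2 * (v j)^2 + (l j - lam j) * v j) := by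
  have hmax : ∀ j, max (0:ℝ) (v j) = v j := fun j => max_eq_right (hv j)
  unfold Eobj
  simp only [hmax, mul_zero, sub_zero]
  rw [Finset.mul_sum, ← Finset.sum_add_distrib]
  exact Finset.sum_congr rfl fun j _ => by ring

theorem lemma1_vector_minimizer (m : ℕ) (hm : 0 < m)
    (l : Fin m → ℝ) (hl : ∀ j, 0 ≤ l j)
    (lam : Fin m → ℝ) (hlam : ∀ j, 0 < lam j)
    (γ : ℝ) (hγ : 0 < γ) (ε : ℝ) (hε0 : 0 < ε) (hε1 : ε < 1) :
    let vstar : Fin m → ℝ := fun j =>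
      if lam j < l j then 0 else if l j < lam j * (1 - ε) then ε else 1 - l j / lam j
    (∀ j, 0 ≤ vstar j ∧ vstar j ≤ ε) ∧
      ∀ v : Fin m → ℝ, (∀ j, 0 ≤ v j ∧ v j ≤ ε) →
        Eobj m l lam γ 0 vstar ≤ Eobj m l lam γ 0 v ∧
          (Eobj m l lam γ 0 v = Eobj m l lam γ 0 vstar → v = vstar) := by
  intro vstar
  have hbound : ∀ j, 0 ≤ vstar j ∧ vstar j ≤ ε := by
    intro j
    show 0 ≤ (if lam j < l j then (0:ℝ) else if l j < lam j * (1-ε) then ε else 1 - l j / lam j)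
      ∧ (if lam j < l j then (0:ℝ) else if l j < lam j * (1-ε) then ε else 1 - l j / lam j) ≤ ε
    split_ifs with h1 h2
    · exact ⟨le_refl 0, hε0.le⟩
    · exact ⟨hε0.le, le_refl ε⟩
    · push_neg at h1 h2
      constructor
      · have : l j / lam j ≤ 1 := (div_le_one (hlam j)).2 h1
        linarith
      · have : (1-ε) ≤ l j / lam j := (le_div_iff₀ (hlam j)).2 (by linarith)
        linarith
  refine ⟨hbound, fun v hv => ?_⟩
  have hEv := Eobj_eq m l lam γ v (fun j => (hv j).1)
  have hEs := Eobj_eq m l lam γ vstar (fun j => (hbound j).1)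
  have hcomp : ∀ j, (lam j / 2 * (vstar j)^2 + (l j - lam j) * vstar j
        ≤ lam j / 2 * (v j)^2 + (l j - lam j) * v j) ∧
      (lam j / 2 * (vstar j)^2 + (l j - lam j) * vstar j
        = lam j / 2 * (v j)^2 + (l j - lam j) * v j → v j = vstar j) :=
    fun j => comp_min (l j) (lam j) ε (v j) (hlam j) (hl j) hε0 hε1 (hv j).1 (hv j).2
  constructor
  · rw [hEv, hEs]
    exact Finset.sum_le_sum fun j _ => (hcomp j).1
  · intro he
    funext j
    by_contra hne
    have hlt : ∀ i ∈ Finset.univ, lam i / 2 * (vstar i)^2 + (l i - lam i) * vstar i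
        ≤ lam i / 2 * (v i)^2 + (l i - lam i) * v i := fun i _ => (hcomp i).1
    have hstrict : lam j / 2 * (vstar j)^2 + (l j - lam j) * vstar j
        < lam j / 2 * (v j)^2 + (l j - lam j) * v j :=
      lt_of_le_of_ne (hcomp j).1 (fun h => hne ((hcomp j).2 h))
    have : Eobj m l lam γ 0 vstar < Eobj m l lam γ 0 v := by
      rw [hEv, hEs]
      exact Finset.sum_lt_sum hlt ⟨j, Finset.mem_univ j, hstrict⟩
    linarith [he ▸ this]
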